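/- For all σ ∈ ℕ⁺, there is a constant c = c(σ) ∈ ℕ⁺ such that every graph G with no induced minor isomorphic to K_{σ,σ} admits a c-edge-coloring of G-diameter less than 12σ. -/

import Mathlib

/-- The induced subgraph of `G` on `S` is nonempty and connected, expressed via
walks of `G` staying inside `S`. -/
def ConnectedIn {V : Type*} (G : SimpleGraph V) (S : Set V) : Prop :=
  S.Nonempty ∧ ∀ a ∈ S, ∀ b ∈ S, ∃ w : G.Walk a b, ∀ v ∈ w.support, v ∈ S

/-- An induced `H`-model in `G`: pairwise disjoint nonempty connected branch sets,
joined by an edge iff the corresponding vertices of `H` are adjacent. -/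
def IsInducedModel {W V : Type*} (H : SimpleGraph W) (G : SimpleGraph V) (X : W → Set V) : Prop :=
  (∀ w, ConnectedIn G (X w)) ∧
  (∀ w w', w ≠ w' → Disjoint (X w) (X w')) ∧
  (∀ w w', H.Adj w w' → ∃ a ∈ X w, ∃ b ∈ X w', G.Adj a b) ∧
  (∀ w w', w ≠ w' → ¬ H.Adj w w' → ∀ a ∈ X w, ∀ b ∈ X w', ¬ G.Adj a b)

/-- `G` has an induced minor isomorphic to `H`. -/
def InducedMinor {W V : Type*} (H : SimpleGraph W) (G : SimpleGraph V) : Prop :=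
  ∃ X : W → Set V, IsInducedModel H G X

/-- An `H`-model in `G` (for the minor relation). -/
def IsMinorModel {W V : Type*} (H : SimpleGraph W) (G : SimpleGraph V) (X : W → Set V) : Prop :=
  (∀ w, ConnectedIn G (X w)) ∧
  (∀ w w', w ≠ w' → Disjoint (X w) (X w')) ∧
  (∀ w w', H.Adj w w' → ∃ a ∈ X w, ∃ b ∈ X w', G.Adj a b)

/-- `G` has a minor isomorphic to `H`. -/
def HasMinor {W V : Type*} (H : SimpleGraph W) (G : SimpleGraph V) : Prop :=
  ∃ X : W → Set V, IsMinorModel H G X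

/-- `(T, β)` is a tree decomposition of `G`. -/
structure IsTreeDecomp {V ι : Type*} (G : SimpleGraph V) (T : SimpleGraph ι)
    (β : ι → Finset V) : Prop where
  tree : T.IsTree
  bags_connected : ∀ v : V, ConnectedIn T {i | v ∈ β i}
  edges_covered : ∀ u v : V, G.Adj u v → ∃ i, u ∈ β i ∧ v ∈ β i

/-- `G` has a tree decomposition of width at most `w`. -/
def TreewidthLE {V : Type*} (G : SimpleGraph V) (w : ℕ) : Prop :=
  ∃ (n : ℕ) (T : SimpleGraph (Fin n)) (β : Fin n → Finset V),
    IsTreeDecomp G T β ∧ ∀ i, (β i).card ≤ w + 1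

noncomputable def treewidth {V : Type*} (G : SimpleGraph V) : ℕ :=
  sInf {w | TreewidthLE G w}

/-- `G` has a path decomposition of width at most `w`. -/
def PathwidthLE {V : Type*} (G : SimpleGraph V) (w : ℕ) : Prop :=
  ∃ (n : ℕ) (β : Fin n → Finset V),
    IsTreeDecomp G (SimpleGraph.pathGraph n) β ∧ ∀ i, (β i).card ≤ w + 1

noncomputable def pathwidth {V : Type*} (G : SimpleGraph V) : ℕ :=
  sInf {w | PathwidthLE G w}

/-- A hereditary class of finite graphs (each finite graph is represented, up to
isomorphism, on some `Fin n`): the class is closed under induced subgraphs,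
i.e. under pulling back along injections. -/
def Hereditary (𝒢 : ∀ n : ℕ, SimpleGraph (Fin n) → Prop) : Prop :=
  ∀ (n m : ℕ) (G : SimpleGraph (Fin n)) (f : Fin m ↪ Fin n),
    𝒢 n G → 𝒢 m (G.comap ⇑f)

/-- A graph `J` is `ζ`-jagged if every induced subgraph with pathwidth at least 3
has at least `ζ` vertices of degree two (in that induced subgraph). -/
def Jagged {V : Type*} (ζ : ℕ) (J : SimpleGraph V) : Prop :=
  ∀ s : Set V, 3 ≤ pathwidth (J.induce s) →
    ζ ≤ {v | v ∈ s ∧ ({w | w ∈ s ∧ J.Adj v w}).ncard = 2}.ncard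

/-- A graph is `d`-degenerate if every nonempty induced subgraph has a vertex of
degree at most `d`. -/
def Degenerate {V : Type*} (d : ℕ) (G : SimpleGraph V) : Prop :=
  ∀ s : Set V, s.Nonempty → ∃ v ∈ s, ({w | w ∈ s ∧ G.Adj v w}).ncard ≤ d

/-- The complete binary tree of radius `ρ`: vertices are binary strings of length
at most `ρ`, and `x` is adjacent to `b :: x` (its children). -/
def binTree (ρ : ℕ) : SimpleGraph {l : List Bool // l.length ≤ ρ} where
  Adj x y := (∃ b : Bool, (x : List Bool) = b :: (y : List Bool)) ∨
             (∃ b : Bool, (y : List Bool) = b :: (x : List Bool))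
  symm := by constructor; rintro x y (h | h); exact Or.inr h; exact Or.inl h
  loopless := by
    constructor
    rintro x (⟨b, hb⟩ | ⟨b, hb⟩) <;>
      · have := congrArg List.length hb
        simp at this

/-- The `n × n` square grid graph. -/
def gridGraph (n : ℕ) : SimpleGraph (Fin n × Fin n) where
  Adj p q := (p.1 = q.1 ∧ ((p.2 : ℕ) + 1 = (q.2 : ℕ) ∨ (q.2 : ℕ) + 1 = (p.2 : ℕ))) ∨
             (p.2 = q.2 ∧ ((p.1 : ℕ) + 1 = (q.1 : ℕ) ∨ (q.1 : ℕ) + 1 = (p.1 : ℕ)))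
  symm := by
    constructor
    rintro p q (⟨h1, h2⟩ | ⟨h1, h2⟩)
    · exact Or.inl ⟨h1.symm, h2.symm⟩
    · exact Or.inr ⟨h1.symm, h2.symm⟩
  loopless := by constructor; rintro p (⟨_, h | h⟩ | ⟨_, h | h⟩) <;> omega

/-- A graph is planar iff it is isomorphic to a minor of some square grid. -/
def IsPlanar {W : Type*} (H : SimpleGraph W) : Prop :=
  ∃ n : ℕ, HasMinor H (gridGraph n)

/-- `S` is the vertex set of an induced path in `G` from `x` to `y`. -/
def IsInducedPathSet {V : Type*} (G : SimpleGraph V) (S : Set V) (x y : V) : Prop :=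
  ∃ p : G.Walk x y, p.IsPath ∧ {v | v ∈ p.support} = S ∧
    ∀ u v : V, u ∈ p.support → v ∈ p.support → G.Adj u v → p.toSubgraph.Adj u v

/-- `G` has a stable strong `(κ, lam)`-block: a stable set `B` of at least `κ`
vertices together with, for each unordered pair of distinct vertices of `B`,
at least `lam` pairwise internally disjoint induced paths joining them, such that
path systems of distinct pairs meet exactly in the shared endpoints. -/
def HasStableStrongBlock {V : Type*} (G : SimpleGraph V) (κ lam : ℕ) : Prop :=
  ∃ (B : Set V) (P : V → V → Fin lam → Set V),
    κ ≤ B.ncard ∧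
    (∀ x ∈ B, ∀ y ∈ B, x ≠ y → ¬ G.Adj x y) ∧
    (∀ x ∈ B, ∀ y ∈ B, x ≠ y →
      (∀ i, IsInducedPathSet G (P x y i) x y) ∧
      (∀ i j, i ≠ j → ∀ v, v ∈ P x y i → v ∈ P x y j → v = x ∨ v = y) ∧
      (∀ i, P x y i = P y x i)) ∧
    (∀ x ∈ B, ∀ y ∈ B, ∀ x' ∈ B, ∀ y' ∈ B, x ≠ y → x' ≠ y' →
      ({x, y} : Set V) ≠ {x', y'} →
      (⋃ i, P x y i) ∩ (⋃ i, P x' y' i) = (({x, y} : Set V) ∩ {x', y'}))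

/-- `G` is `(κ, lam)`-separable: there is no stable strong `(κ, lam)`-block in `G`. -/
def Separable {V : Type*} (G : SimpleGraph V) (κ lam : ℕ) : Prop :=
  ¬ HasStableStrongBlock G κ lam

/-- In the tree `T` rooted at `u`, `w` is a child of `v`. -/
def IsChild {α : Type*} (T : SimpleGraph α) (u v w : α) : Prop :=
  T.Adj v w ∧ T.dist u w = T.dist u v + 1

/-- `(T, u)` is a `(δ, ρ)`-regular rooted tree: `T` is a tree, every vertex is at
distance at most `ρ` from `u`, and every vertex at distance less than `ρ` from `u`
has exactly `δ` children. -/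
def RootedRegular {α : Type*} (T : SimpleGraph α) (u : α) (δ ρ : ℕ) : Prop :=
  T.IsTree ∧ (∀ v, T.dist u v ≤ ρ) ∧
    ∀ v, T.dist u v < ρ → {w | IsChild T u v w}.ncard = δ

/-- The rooted tree induced by `T` on `s`, with root `r`, is a rooted subtree of
`(T, u)`: it is a tree and every child relation in it is a child relation in `(T, u)`. -/
def IsRootedSubtree {α : Type*} (T : SimpleGraph α) (u : α) (s : Set α) (r : ↥s) : Prop :=
  (T.induce s).IsTree ∧
    ∀ v w : ↥s, IsChild (T.induce s) r v w → IsChild T u (↑v) (↑w)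

open Classical in
/-- The `i`-ancestor of `v` in the tree `T` rooted at `u`: the vertex on the unique
`u`–`v` path at distance `i` from `v`. -/
noncomputable def ancestor {α : Type*} (T : SimpleGraph α) (u v : α) (i : ℕ) : α :=
  if h : ∃ w, T.dist u w + i = T.dist u v ∧ T.dist w v = i then h.choose else v

/-- The rooted tree `T` (mapped into `G` by `f`) is path-uniform in `G`. -/
def PathUniform {V β : Type*} (G : SimpleGraph V) (f : β → V) (T : SimpleGraph β)
    (r : β) (ρ : ℕ) : Prop :=
  ∀ v v' : β, T.dist r v = ρ → T.dist r v' = ρ → ∀ i j : ℕ, i ≤ ρ → j ≤ ρ →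
    (G.Adj (f (ancestor T r v i)) (f (ancestor T r v j)) ↔
      G.Adj (f (ancestor T r v' i)) (f (ancestor T r v' j)))

/-- The rooted tree `T` (mapped into `G` by `f`) is path-induced in `G`. -/
def PathInduced {V β : Type*} (G : SimpleGraph V) (f : β → V) (T : SimpleGraph β)
    (r : β) (ρ : ℕ) : Prop :=
  ∀ v : β, T.dist r v = ρ → ∀ i j : ℕ, i ≤ ρ → j ≤ ρ →
    (G.Adj (f (ancestor T r v i)) (f (ancestor T r v j)) ↔ (i + 1 = j ∨ j + 1 = i))

/-- The rooted tree `T` (mapped into `G` by `f`) is branch-induced in `G`: every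
`G`-edge between vertices of `T` that is not a `T`-edge joins a vertex to one of
its ancestors. -/
def BranchInduced {V β : Type*} (G : SimpleGraph V) (f : β → V) (T : SimpleGraph β)
    (r : β) : Prop :=
  ∀ v w : β, G.Adj (f v) (f w) → ¬ T.Adj v w →
    (T.dist r v + T.dist v w = T.dist r w ∨ T.dist r w + T.dist w v = T.dist r v)

/-- `G` has a (not necessarily induced) subgraph isomorphic to `H`. -/
def HasSubgraphIso {W V : Type*} (H : SimpleGraph W) (G : SimpleGraph V) : Prop :=
  ∃ f : W → V, Function.Injective f ∧ ∀ a b, H.Adj a b → G.Adj (f a) (f b)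

/-- The spanning subgraph of `G` consisting of the edges of color `i` under the
edge-coloring `F`. -/
def colorSub {V : Type*} {c : ℕ} (G : SimpleGraph V) (F : V → V → Fin c) (i : Fin c) :
    SimpleGraph V where
  Adj u v := G.Adj u v ∧ F u v = i ∧ F v u = i
  symm := by constructor; rintro u v ⟨h1, h2, h3⟩; exact ⟨h1.symm, h3, h2⟩
  loopless := by constructor; rintro u ⟨h, _, _⟩; exact (G.ne_of_adj h) rfl

/-- Distance from `a` to `b` within the induced subgraph `G[S]` (via walks of `G`
all of whose vertices lie in `S`). -/
noncomputable def distIn {V : Type*} (G : SimpleGraph V) (S : Set V) (a b : V) : ℕ :=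
  sInf {n | ∃ w : G.Walk a b, w.length = n ∧ ∀ v ∈ w.support, v ∈ S}

/-- `(a 0, …, a (σ+1))` is a `(σ, θ)`-`X`-abyss in `G`. -/
def IsAbyss {V : Type*} (G : SimpleGraph V) (X : Set V) (σ θ : ℕ) (a : ℕ → V) : Prop :=
  ∃ (S : ℕ → Set V) (ρ : ℕ → ℕ),
    S 0 ⊆ X ∧ ConnectedIn G (S 0) ∧ (∀ k ≤ σ + 1, a k ∈ S 0) ∧
    (∀ i < σ,
      S (i + 1) ⊆ {v | v ∈ S i ∧ distIn G (S i) (a i) v = ρ i + 1} ∧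
      ConnectedIn G (S (i + 1)) ∧
      ∀ k, i + 1 ≤ k → k ≤ σ + 1 → a k ∈ S (i + 1)) ∧
    θ ≤ G.dist (a σ) (a (σ + 1))

/-- The torso of a tree decomposition `(T, β)` of `G` at the node `x`. -/
def torso {V ι : Type*} (G : SimpleGraph V) (T : SimpleGraph ι) (β : ι → Finset V)
    (x : ι) : SimpleGraph {v : V // v ∈ β x} where
  Adj u v := u ≠ v ∧ (G.Adj ↑u ↑v ∨ ∃ y, T.Adj x y ∧ ↑u ∈ β y ∧ ↑v ∈ β y)
  symm := by
    constructor
    rintro u v ⟨hne, h | ⟨y, hy, h1, h2⟩⟩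
    · exact ⟨hne.symm, Or.inl h.symm⟩
    · exact ⟨hne.symm, Or.inr ⟨y, hy, h2, h1⟩⟩
  loopless := by constructor; rintro u ⟨hne, _⟩; exact hne rfl

/-- The vertex set of the component of `T - x` containing `y` (denoted `T_{y∖x}`). -/
def compAway {ι : Type*} (T : SimpleGraph ι) (y x : ι) : Set ι :=
  {z | ∃ w : T.Walk y z, x ∉ w.support}

/-- A tree decomposition `(T, β)` of `G` is tight. -/
def Tight {V ι : Type*} (G : SimpleGraph V) (T : SimpleGraph ι) (β : ι → Finset V) : Prop :=
  ∀ x y, T.Adj x y →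
    ∃ v₀ ∈ (⋃ z ∈ compAway T y x, (β z : Set V)) \ (⋃ z ∈ compAway T x y, (β z : Set V)),
      ∀ u : V, u ∈ β x → u ∈ β y →
        ∃ c : V, G.Adj u c ∧ ∃ w : G.Walk v₀ c, ∀ p ∈ w.support,
          p ∈ (⋃ z ∈ compAway T y x, (β z : Set V)) \ (⋃ z ∈ compAway T x y, (β z : Set V))

/-- `G` has a subgraph isomorphic to some subdivision of the complete graph `K_μ`:
equivalently, there are `μ` branch vertices joined by pairwise internally disjoint
paths of nonzero length. -/
def HasKSubdivision {V : Type*} (μ : ℕ) (G : SimpleGraph V) : Prop :=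
  ∃ b : Fin μ → V, Function.Injective b ∧
    ∃ P : ∀ i j : Fin μ, i < j → G.Walk (b i) (b j),
      (∀ i j (h : i < j), (P i j h).IsPath) ∧
      (∀ i j (h : i < j), ∀ m : Fin μ, b m ∈ (P i j h).support → m = i ∨ m = j) ∧
      (∀ i j (h : i < j), ∀ k l (h' : k < l), (i, j) ≠ (k, l) →
        ∀ v : V, v ∈ (P i j h).support → v ∈ (P k l h').support →
          (v = b i ∨ v = b j) ∧ (v = b k ∨ v = b l))


namespace S13

variable {V : Type*} {G : SimpleGraph V} {S : Set V} {a b u v x y z : V}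

/-- Reachability within a set. -/
def RIn (G : SimpleGraph V) (S : Set V) (a b : V) : Prop :=
  ∃ w : G.Walk a b, ∀ v ∈ w.support, v ∈ S

lemma RIn.refl (h : a ∈ S) : RIn G S a a :=
  ⟨SimpleGraph.Walk.nil, by simp [h]⟩

lemma RIn.symm (h : RIn G S a b) : RIn G S b a := by
  obtain ⟨w, hw⟩ := h
  exact ⟨w.reverse, by intro v hv; rw [SimpleGraph.Walk.support_reverse] at hv
                       exact hw v (List.mem_reverse.mp hv)⟩

lemma RIn.trans (h : RIn G S a b) (h' : RIn G S b u) : RIn G S a u := by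
  obtain ⟨w, hw⟩ := h; obtain ⟨w', hw'⟩ := h'
  refine ⟨w.append w', ?_⟩
  intro v hv
  rw [SimpleGraph.Walk.mem_support_append_iff] at hv
  rcases hv with hv | hv
  · exact hw v hv
  · exact hw' v hv

lemma RIn.mem_left (h : RIn G S a b) : a ∈ S := by
  obtain ⟨w, hw⟩ := h; exact hw a w.start_mem_support

lemma RIn.mem_right (h : RIn G S a b) : b ∈ S := by
  obtain ⟨w, hw⟩ := h; exact hw b w.end_mem_support

lemma RIn.reachable (h : RIn G S a b) : G.Reachable a b := by
  obtain ⟨w, _⟩ := h; exact ⟨w⟩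

lemma distIn_le {w : G.Walk a b} (hw : ∀ v ∈ w.support, v ∈ S) :
    distIn G S a b ≤ w.length :=
  Nat.sInf_le ⟨w, rfl, hw⟩

lemma RIn.exists_walk (h : RIn G S a b) :
    ∃ w : G.Walk a b, w.length = distIn G S a b ∧ ∀ v ∈ w.support, v ∈ S := by
  have hne : {n | ∃ w : G.Walk a b, w.length = n ∧ ∀ v ∈ w.support, v ∈ S}.Nonempty := by
    obtain ⟨w, hw⟩ := h; exact ⟨w.length, w, rfl, hw⟩
  exact Nat.sInf_mem hne

lemma distIn_self (h : a ∈ S) : distIn G S a a = 0 := by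
  have := distIn_le (G := G) (S := S) (w := SimpleGraph.Walk.nil (u := a))
    (by intro v hv; simp at hv; subst hv; exact h)
  simpa using this

/-- one-edge triangle inequality for distIn -/
lemma distIn_step (h : RIn G S a u) (huv : G.Adj u v) (hv : v ∈ S) :
    distIn G S a v ≤ distIn G S a u + 1 := by
  obtain ⟨w, hwl, hwS⟩ := h.exists_walk
  have hsup : ∀ z ∈ (w.concat huv).support, z ∈ S := by
    intro z hz
    rw [SimpleGraph.Walk.support_concat, List.mem_append] at hz
    rcases hz with hz | hz
    · exact hwS z hz
    · simp at hz; subst hz; exact hv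
  have := distIn_le (S := S) hsup
  rwa [SimpleGraph.Walk.length_concat, hwl] at this

lemma RIn.step (h : RIn G S a u) (huv : G.Adj u v) (hv : v ∈ S) : RIn G S a v := by
  obtain ⟨w, hwS⟩ := h
  refine ⟨w.concat huv, ?_⟩
  intro z hz
  rw [SimpleGraph.Walk.support_concat, List.mem_append] at hz
  rcases hz with hz | hz
  · exact hwS z hz
  · simp at hz; subst hz; exact hv

/-- predecessor on a geodesic inside `S` -/
lemma distIn_pred (h : RIn G S a b) {k : ℕ} (hd : distIn G S a b = k + 1) :
    ∃ p, G.Adj p b ∧ p ∈ S ∧ RIn G S a p ∧ distIn G S a p = k := by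
  obtain ⟨w, hwl, hwS⟩ := h.exists_walk
  rw [hd] at hwl
  -- decompose the reverse walk
  have hwS' : ∀ z ∈ w.reverse.support, z ∈ S := by
    intro z hz; rw [SimpleGraph.Walk.support_reverse, List.mem_reverse] at hz; exact hwS z hz
  have hlen : w.reverse.length = k + 1 := by rw [SimpleGraph.Walk.length_reverse, hwl]
  rcases hrw : w.reverse with _ | ⟨hadj, q⟩
  · rw [hrw] at hlen; simp at hlen
  · rename_i p
    rw [hrw] at hlen hwS'
    simp only [SimpleGraph.Walk.length_cons, Nat.add_right_cancel_iff] at hlen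
    have hpS : p ∈ S := hwS' p (by simp [SimpleGraph.Walk.support_cons])
    have hqS : ∀ z ∈ q.support, z ∈ S := by
      intro z hz; exact hwS' z (by simp [SimpleGraph.Walk.support_cons, hz])
    have hRp : RIn G S a p := ⟨q.reverse, by
      intro z hz; rw [SimpleGraph.Walk.support_reverse, List.mem_reverse] at hz; exact hqS z hz⟩
    refine ⟨p, hadj.symm, hpS, hRp, le_antisymm ?_ ?_⟩
    · have := distIn_le (S := S) (w := q.reverse) (by
        intro z hz; rw [SimpleGraph.Walk.support_reverse, List.mem_reverse] at hz; exact hqS z hz)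
      rwa [SimpleGraph.Walk.length_reverse, hlen] at this
    · have h2 := distIn_step hRp hadj.symm (h.mem_right)
      omega

lemma dist_le_distIn (h : RIn G S a b) : G.dist a b ≤ distIn G S a b := by
  obtain ⟨w, hwl, _⟩ := h.exists_walk
  exact hwl ▸ SimpleGraph.dist_le w

/-- distance triangle inequality for reachable vertices -/
lemma dist_tri (h1 : G.Reachable a b) (h2 : G.Reachable b u) :
    G.dist a u ≤ G.dist a b + G.dist b u := by
  obtain ⟨p, hp⟩ := h1.exists_walk_length_eq_dist
  obtain ⟨q, hq⟩ := h2.exists_walk_length_eq_dist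
  calc G.dist a u ≤ (p.append q).length := SimpleGraph.dist_le _
    _ = _ := by rw [SimpleGraph.Walk.length_append, hp, hq]

lemma adj_dist_le (h : G.Reachable x u) (huv : G.Adj u v) :
    G.dist x v ≤ G.dist x u + 1 := by
  obtain ⟨p, hp⟩ := h.exists_walk_length_eq_dist
  calc G.dist x v ≤ (p.concat huv).length := SimpleGraph.dist_le _
    _ = _ := by rw [SimpleGraph.Walk.length_concat, hp]

lemma adj_dist_le_one (huv : G.Adj u v) : G.dist u v ≤ 1 := by
  have := SimpleGraph.dist_le huv.toWalk
  simpa using this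

/-- discrete intermediate value theorem along a walk -/
lemma walk_ivt (f : V → ℕ) {P : V → Prop}
    (hlip : ∀ p q, G.Adj p q → P p → P q → f q ≤ f p + 1) :
    ∀ {α β : V} (w : G.Walk α β), (∀ z ∈ w.support, P z) → ∀ t, f α ≤ t → t ≤ f β →
      ∃ z ∈ w.support, f z = t := by
  intro α β w
  induction w with
  | nil =>
    rename_i u
    intro _ t h1 h2
    exact ⟨u, by simp, le_antisymm h1 h2⟩
  | cons h p ih =>
    rename_i u c d
    intro hsup t h1 h2
    by_cases hut : f u = t
    · exact ⟨u, by simp, hut⟩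
    · have hPu : P u := hsup u (by simp [SimpleGraph.Walk.support_cons])
      have hPc : P c := hsup c (by simp [SimpleGraph.Walk.support_cons, p.start_mem_support])
      have hfc : f c ≤ t := by
        have := hlip u c h hPu hPc
        omega
      have hsup' : ∀ z ∈ p.support, P z := by
        intro z hz; exact hsup z (by simp [SimpleGraph.Walk.support_cons, hz])
      obtain ⟨z, hz, hzt⟩ := ih hsup' t hfc h2
      exact ⟨z, by simp [SimpleGraph.Walk.support_cons, hz], hzt⟩


theorem extract {σ : ℕ} (hσ : 1 ≤ σ) (S : ℕ → Set V) (a : ℕ → V) (μ : ℕ → ℕ)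
    (ha : ∀ i ≤ σ, a i ∈ S i)
    (hreach : ∀ i ≤ σ, ∀ w ∈ S i, RIn G (S i) (a i) w)
    (hsub : ∀ i < σ, ∀ w ∈ S (i+1), w ∈ S i ∧
      (distIn G (S i) (a i) w = μ i ∨ distIn G (S i) (a i) w = μ i + 1))
    (hμ : ∀ i < σ, 2 ≤ μ i)
    {x y : V} (hx : x ∈ S σ) (hy : y ∈ S σ) (hd : 6 * σ ≤ G.dist x y) :
    InducedMinor (completeBipartiteGraph (Fin σ) (Fin σ)) G := by
  classical
  have hnest : ∀ j ≤ σ, ∀ i ≤ j, ∀ w ∈ S j, w ∈ S i := by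
    intro j hj
    induction j with
    | zero =>
      intro i hi w hw
      have : i = 0 := by omega
      subst this; exact hw
    | succ n ihn =>
      intro i hi w hw
      rcases Nat.eq_or_lt_of_le hi with rfl | hlt
      · exact hw
      · exact ihn (by omega) i (by omega) w ((hsub n (by omega) w hw).1)
  have hband : ∀ i < σ, ∀ w ∈ S σ, w ∈ S i ∧
      (distIn G (S i) (a i) w = μ i ∨ distIn G (S i) (a i) w = μ i + 1) := by
    intro i hi w hw
    exact hsub i hi w (hnest σ le_rfl (i+1) (by omega) w hw)
  set Aset : Fin σ → Set V :=
    fun i => {w | w ∈ S i ∧ distIn G (S i) (a i) w + 2 ≤ μ i} with hAsetdef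
  have hASi : ∀ i : Fin σ, ∀ v ∈ Aset i, v ∈ S i := fun i v hv => hv.1
  have haA : ∀ i : Fin σ, a i ∈ Aset i := by
    intro i
    refine ⟨ha i i.isLt.le, ?_⟩
    rw [distIn_self (ha i i.isLt.le)]
    have := hμ i i.isLt; omega
  have ballwalk : ∀ i : Fin σ, ∀ w ∈ Aset i,
      ∃ p : G.Walk (a i) w, ∀ z ∈ p.support, z ∈ Aset i := by
    intro i
    suffices h : ∀ n, ∀ w, w ∈ S i → distIn G (S i) (a i) w = n → n + 2 ≤ μ i →
        ∃ p : G.Walk (a i) w, ∀ z ∈ p.support, z ∈ Aset i by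
      intro w hw; exact h _ w hw.1 rfl hw.2
    intro n
    induction n with
    | zero =>
      intro w hw h0 _
      obtain ⟨q, hql, _⟩ := (hreach i i.isLt.le w hw).exists_walk
      rw [h0] at hql
      have := q.eq_of_length_eq_zero hql
      subst this
      exact ⟨SimpleGraph.Walk.nil, by intro z hz; simp at hz; subst hz; exact haA i⟩
    | succ n ih =>
      intro w hw hsd hle
      obtain ⟨p, hadj, hpS, hRp, hpd⟩ := distIn_pred (hreach i i.isLt.le w hw) hsd
      obtain ⟨q, hq⟩ := ih p hpS hpd (by omega)
      refine ⟨q.concat hadj, ?_⟩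
      intro z hz
      rw [SimpleGraph.Walk.support_concat, List.mem_append] at hz
      rcases hz with hz | hz
      · exact hq z hz
      · simp at hz; subst hz; exact ⟨hw, by omega⟩
  have hRx : RIn G (S σ) (a σ) x := hreach σ le_rfl x hx
  have hreachx : ∀ w ∈ S σ, G.Reachable x w := by
    intro w hw
    exact (hRx.symm.trans (hreach σ le_rfl w hw)).reachable
  have hWex : ∀ m : Fin σ, ∃ z, z ∈ S σ ∧ G.dist x z = 6 * (m : ℕ) := by
    intro m
    obtain ⟨Q, hQ⟩ := hRx.symm.trans (hreach σ le_rfl y hy)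
    have hlip : ∀ p q, G.Adj p q → p ∈ S σ → q ∈ S σ →
        G.dist x q ≤ G.dist x p + 1 := by
      intro p q h hp hq; exact adj_dist_le (hreachx p hp) h
    have h1 : G.dist x x ≤ 6 * (m : ℕ) := by simp [SimpleGraph.dist_self]
    have h2 : 6 * (m : ℕ) ≤ G.dist x y := by
      have := m.isLt; omega
    obtain ⟨z, hz, hzt⟩ := walk_ivt (G := G) (fun v => G.dist x v) hlip Q hQ _ h1 h2
    exact ⟨z, hQ z hz, hzt⟩
  choose W hWS hWd using hWex
  have htooth : ∀ i m : Fin σ, ∃ p q s : V,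
      G.Adj q (W m) ∧ (p = q ∨ G.Adj p q) ∧ G.Adj s p ∧ s ∈ Aset i ∧
      p ∈ S i ∧ q ∈ S i ∧ distIn G (S i) (a i) p + 1 = μ i ∧
      (distIn G (S i) (a i) q + 1 = μ i ∨ distIn G (S i) (a i) q = μ i) := by
    intro i m
    have hi : (i : ℕ) < σ := i.isLt
    obtain ⟨hWSi, hWd'⟩ := hband i hi (W m) (hWS m)
    have hRW : RIn G (S i) (a i) (W m) := hreach i hi.le _ hWSi
    obtain ⟨k, hk⟩ : ∃ k, μ i = k + 2 := ⟨μ i - 2, by have := hμ i hi; omega⟩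
    rcases hWd' with h | h
    · obtain ⟨q, hq1, hq2, hq3, hq4⟩ := distIn_pred hRW
        (show distIn G (S (i:ℕ)) (a i) (W m) = (k+1) + 1 by omega)
      obtain ⟨s, hs1, hs2, hs3, hs4⟩ := distIn_pred hq3
        (show distIn G (S (i:ℕ)) (a i) q = k + 1 by omega)
      exact ⟨q, q, s, hq1, Or.inl rfl, hs1, ⟨hs2, by omega⟩, hq2, hq2, by omega,
        Or.inl (by omega)⟩
    · obtain ⟨q, hq1, hq2, hq3, hq4⟩ := distIn_pred hRW
        (show distIn G (S (i:ℕ)) (a i) (W m) = (k+2) + 1 by omega)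
      obtain ⟨p, hp1, hp2, hp3, hp4⟩ := distIn_pred hq3
        (show distIn G (S (i:ℕ)) (a i) q = (k+1) + 1 by omega)
      obtain ⟨s, hs1, hs2, hs3, hs4⟩ := distIn_pred hp3
        (show distIn G (S (i:ℕ)) (a i) p = k + 1 by omega)
      exact ⟨p, q, s, hq1, Or.inr hp1, hs1, ⟨hs2, by omega⟩, hp2, hq2, by omega,
        Or.inr (by omega)⟩
  choose P Q T hQadj hPQ hTadj hTA hPS hQS hPd hQd using htooth
  set Bset : Fin σ → Set V :=
    fun m => insert (W m) (⋃ i : Fin σ, ({P i m, Q i m} : Set V)) with hBsetdef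
  have hBmem : ∀ m v, v ∈ Bset m ↔ v = W m ∨ ∃ i, v = P i m ∨ v = Q i m := by
    intro m v; simp [hBsetdef]
  have hWB : ∀ m, W m ∈ Bset m := fun m => Set.mem_insert _ _
  have hPB : ∀ i m, P i m ∈ Bset m := by
    intro i m; rw [hBmem]; exact Or.inr ⟨i, Or.inl rfl⟩
  have hQB : ∀ i m, Q i m ∈ Bset m := by
    intro i m; rw [hBmem]; exact Or.inr ⟨i, Or.inr rfl⟩
  have walkInB : ∀ m, ∀ v ∈ Bset m, ∃ p : G.Walk (W m) v, ∀ z ∈ p.support, z ∈ Bset m := by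
    intro m v hv
    rw [hBmem] at hv
    rcases hv with rfl | ⟨i, rfl | rfl⟩
    · exact ⟨SimpleGraph.Walk.nil, by intro z hz; simp at hz; subst hz; exact hWB m⟩
    · rcases hPQ i m with heq | hadj
      · rw [heq]
        refine ⟨(hQadj i m).symm.toWalk, ?_⟩
        intro z hz
        simp [SimpleGraph.Adj.toWalk, SimpleGraph.Walk.support_cons] at hz
        rcases hz with rfl | rfl
        · exact hWB m
        · exact hQB i m
      · refine ⟨SimpleGraph.Walk.cons (hQadj i m).symm hadj.symm.toWalk, ?_⟩
        intro z hz
        simp [SimpleGraph.Adj.toWalk, SimpleGraph.Walk.support_cons] at hz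
        rcases hz with rfl | rfl | rfl
        · exact hWB m
        · exact hQB i m
        · exact hPB i m
    · refine ⟨(hQadj i m).symm.toWalk, ?_⟩
      intro z hz
      simp [SimpleGraph.Adj.toWalk, SimpleGraph.Walk.support_cons] at hz
      rcases hz with rfl | rfl
      · exact hWB m
      · exact hQB i m
  have hBnear : ∀ m, ∀ v ∈ Bset m, G.Reachable (W m) v ∧ G.dist (W m) v ≤ 2 := by
    intro m v hv
    rw [hBmem] at hv
    rcases hv with rfl | ⟨i, rfl | rfl⟩
    · exact ⟨⟨SimpleGraph.Walk.nil⟩, by simp [SimpleGraph.dist_self]⟩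
    · rcases hPQ i m with heq | hadj
      · rw [heq]
        exact ⟨((hQadj i m).symm).reachable,
          (adj_dist_le_one (hQadj i m).symm).trans (by omega)⟩
      · have hr1 : G.Reachable (W m) (Q i m) := ((hQadj i m).symm).reachable
        have hr2 : G.Reachable (Q i m) (P i m) := (hadj.symm).reachable
        refine ⟨hr1.trans hr2, ?_⟩
        have t1 := dist_tri hr1 hr2
        have t2 := adj_dist_le_one (hQadj i m).symm
        have t3 := adj_dist_le_one hadj.symm
        omega
    · exact ⟨((hQadj i m).symm).reachable,
        (adj_dist_le_one (hQadj i m).symm).trans (by omega)⟩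
  have hWrch : ∀ m m' : Fin σ, G.Reachable (W m) (W m') := by
    intro m m'; exact (hreachx _ (hWS m)).symm.trans (hreachx _ (hWS m'))
  have hWfar : ∀ m m' : Fin σ, m ≠ m' → 6 ≤ G.dist (W m) (W m') := by
    have key : ∀ m m' : Fin σ, (m : ℕ) < (m' : ℕ) → 6 ≤ G.dist (W m) (W m') := by
      intro m m' hlt
      have htr : G.dist x (W m') ≤ G.dist x (W m) + G.dist (W m) (W m') :=
        dist_tri (hreachx _ (hWS m)) (hWrch m m')
      have e1 := hWd m
      have e2 := hWd m'
      omega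
    intro m m' hne
    rcases lt_or_gt_of_ne (fun h => hne (Fin.ext h)) with h | h
    · exact key m m' h
    · rw [SimpleGraph.dist_comm]; exact key m' m h
  have hBfar : ∀ m m' : Fin σ, m ≠ m' → ∀ u ∈ Bset m, ∀ v ∈ Bset m', 2 ≤ G.dist u v := by
    intro m m' hne u hu v hv
    obtain ⟨hru, hdu⟩ := hBnear m u hu
    obtain ⟨hrv, hdv⟩ := hBnear m' v hv
    have hruv : G.Reachable u v := (hru.symm.trans (hWrch m m')).trans hrv
    have h1 : G.dist (W m) (W m') ≤ G.dist (W m) u + G.dist u (W m') :=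
      dist_tri hru (hru.symm.trans (hWrch m m'))
    have h2 : G.dist u (W m') ≤ G.dist u v + G.dist v (W m') :=
      dist_tri hruv hrv.symm
    have h3 : G.dist v (W m') = G.dist (W m') v := SimpleGraph.dist_comm
    have h6 := hWfar m m' hne
    omega
  have hAband : ∀ i j : Fin σ, (i : ℕ) < (j : ℕ) → ∀ v ∈ S (j : ℕ),
      μ i ≤ distIn G (S (i : ℕ)) (a i) v := by
    intro i j hij v hv
    have hv' : v ∈ S ((i : ℕ) + 1) := hnest j j.isLt.le ((i : ℕ) + 1) (by omega) v hv
    rcases (hsub i i.isLt v hv').2 with h | h <;> omega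
  have hAAnadj : ∀ i j : Fin σ, (i : ℕ) < (j : ℕ) → ∀ u ∈ Aset i, ∀ v ∈ Aset j,
      ¬ G.Adj u v := by
    intro i j hij u hu v hv hadj
    have hvSi : v ∈ S (i : ℕ) := hnest j j.isLt.le i (by omega) v (hASi j v hv)
    have hstep := distIn_step (hreach i i.isLt.le u hu.1) hadj hvSi
    have hb := hAband i j hij v (hASi j v hv)
    have := hu.2; omega
  have hAAdisj : ∀ i j : Fin σ, (i : ℕ) < (j : ℕ) → ∀ v, v ∈ Aset i → v ∈ Aset j → False := by
    intro i j hij v hv hv'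
    have hb := hAband i j hij v (hASi j v hv')
    have := hv.2; omega
  have hABdisj : ∀ i m : Fin σ, ∀ v, v ∈ Aset i → v ∈ Bset m → False := by
    intro i m v hvA hvB
    have hi : (i : ℕ) < σ := i.isLt
    rw [hBmem] at hvB
    rcases hvB with rfl | ⟨j, rfl | rfl⟩
    · rcases (hband i hi _ (hWS m)).2 with h | h <;> (have := hvA.2; omega)
    · rcases lt_trichotomy ((j : ℕ)) ((i : ℕ)) with hji | hji | hji
      · have hv' : (P j m) ∈ S ((j : ℕ) + 1) :=
          hnest i hi.le ((j : ℕ) + 1) (by omega) _ hvA.1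
        rcases (hsub j j.isLt _ hv').2 with h | h <;> (have := hPd j m; omega)
      · have hj : j = i := Fin.ext hji
        subst hj
        have := hPd j m; have := hvA.2; omega
      · have h1 := hAband i j hji _ (hPS j m)
        have := hvA.2; omega
    · -- v = Q j m : adjacency to the anchor contradicts deep membership
      have hWmSi : W m ∈ S (i : ℕ) := (hband i hi _ (hWS m)).1
      have hstep := distIn_step (hreach i hi.le _ hvA.1) (hQadj j m) hWmSi
      rcases (hband i hi _ (hWS m)).2 with hw | hw <;> (have := hvA.2; omega)
  have hAconn : ∀ i : Fin σ, ConnectedIn G (Aset i) := by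
    intro i
    refine ⟨⟨a i, haA i⟩, ?_⟩
    intro u hu v hv
    obtain ⟨p, hp⟩ := ballwalk i u hu
    obtain ⟨q, hq⟩ := ballwalk i v hv
    refine ⟨p.reverse.append q, ?_⟩
    intro z hz
    rw [SimpleGraph.Walk.mem_support_append_iff] at hz
    rcases hz with hz | hz
    · rw [SimpleGraph.Walk.support_reverse, List.mem_reverse] at hz; exact hp z hz
    · exact hq z hz
  have hBconn : ∀ m : Fin σ, ConnectedIn G (Bset m) := by
    intro m
    refine ⟨⟨W m, hWB m⟩, ?_⟩
    intro u hu v hv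
    obtain ⟨p, hp⟩ := walkInB m u hu
    obtain ⟨q, hq⟩ := walkInB m v hv
    refine ⟨p.reverse.append q, ?_⟩
    intro z hz
    rw [SimpleGraph.Walk.mem_support_append_iff] at hz
    rcases hz with hz | hz
    · rw [SimpleGraph.Walk.support_reverse, List.mem_reverse] at hz; exact hp z hz
    · exact hq z hz
  refine ⟨Sum.elim (fun i => Aset i) (fun m => Bset m), ?_, ?_, ?_, ?_⟩
  · intro w
    cases w with
    | inl i => exact hAconn i
    | inr m => exact hBconn m
  · intro w w' hne
    cases w with
    | inl i =>
      cases w' with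
      | inl j =>
        have hij : (i : ℕ) ≠ (j : ℕ) := fun h => hne (congrArg Sum.inl (Fin.ext h))
        rw [Set.disjoint_left]
        intro v hv hv'
        rcases lt_or_gt_of_ne hij with h | h
        · exact hAAdisj i j h v hv hv'
        · exact hAAdisj j i h v hv' hv
      | inr m =>
        rw [Set.disjoint_left]
        intro v hv hv'
        exact hABdisj i m v hv hv'
    | inr m =>
      cases w' with
      | inl i =>
        rw [Set.disjoint_left]
        intro v hv hv'
        exact hABdisj i m v hv' hv
      | inr m' =>
        have hmm : m ≠ m' := fun h => hne (congrArg Sum.inr h)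
        rw [Set.disjoint_left]
        intro v hv hv'
        have h2 := hBfar m m' hmm v hv v hv'
        have h0 : G.dist v v = 0 := SimpleGraph.dist_self
        omega
  · intro w w' hadj
    cases w with
    | inl i =>
      cases w' with
      | inl j => simp [completeBipartiteGraph] at hadj
      | inr m => exact ⟨T i m, hTA i m, P i m, hPB i m, hTadj i m⟩
    | inr m =>
      cases w' with
      | inl i => exact ⟨P i m, hPB i m, T i m, hTA i m, (hTadj i m).symm⟩
      | inr m' => simp [completeBipartiteGraph] at hadj
  · intro w w' hne hnadj u hu v hv hadj
    cases w with
    | inl i =>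
      cases w' with
      | inl j =>
        have hij : (i : ℕ) ≠ (j : ℕ) := fun h => hne (congrArg Sum.inl (Fin.ext h))
        rcases lt_or_gt_of_ne hij with h | h
        · exact hAAnadj i j h u hu v hv hadj
        · exact hAAnadj j i h v hv u hu hadj.symm
      | inr m => exact hnadj (by simp [completeBipartiteGraph])
    | inr m =>
      cases w' with
      | inl i => exact hnadj (by simp [completeBipartiteGraph])
      | inr m' =>
        have hmm : m ≠ m' := fun h => hne (congrArg Sum.inr h)
        have h2 := hBfar m m' hmm u hu v hv
        have h1 := adj_dist_le_one hadj
        omega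


-- REAL PART E START
variable {V : Type*} [Nonempty V] {G : SimpleGraph V} {u v z w : V}

noncomputable def ctr (T : Set V) : V := Classical.epsilon (· ∈ T)

lemma ctr_mem {T : Set V} (h : T.Nonempty) : ctr T ∈ T :=
  Classical.epsilon_spec h

noncomputable def lv (G : SimpleGraph V) (T : Set V) (z : V) : ℕ :=
  distIn G T (ctr T) z

noncomputable def chain (G : SimpleGraph V) (u v : V) : ℕ → Set V
  | 0 => {w | G.Reachable u w}
  | d + 1 =>
    {w | ∃ p : G.Walk u w, ∀ z ∈ p.support, z ∈ chain G u v d ∧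
      (lv G (chain G u v d) z = min (lv G (chain G u v d) u) (lv G (chain G u v d) v) ∨
       lv G (chain G u v d) z = min (lv G (chain G u v d) u) (lv G (chain G u v d) v) + 1)}

noncomputable def lab (G : SimpleGraph V) (u v : V) (d : ℕ) : ℕ :=
  min (lv G (chain G u v d) u) (lv G (chain G u v d) v)

lemma mem_chain_succ {d : ℕ} :
    w ∈ chain G u v (d + 1) ↔ ∃ p : G.Walk u w, ∀ z ∈ p.support,
      z ∈ chain G u v d ∧
      (lv G (chain G u v d) z = lab G u v d ∨ lv G (chain G u v d) z = lab G u v d + 1) :=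
  Iff.rfl

lemma chain_band {d : ℕ} (hw : w ∈ chain G u v (d + 1)) :
    w ∈ chain G u v d ∧
      (lv G (chain G u v d) w = lab G u v d ∨ lv G (chain G u v d) w = lab G u v d + 1) := by
  rw [mem_chain_succ] at hw
  obtain ⟨p, hp⟩ := hw
  exact hp w p.end_mem_support

lemma chain_basic (huv : G.Adj u v) (d : ℕ) :
    u ∈ chain G u v d ∧ v ∈ chain G u v d ∧
      ∀ w ∈ chain G u v d, ∃ p : G.Walk u w, ∀ z ∈ p.support, z ∈ chain G u v d := by
  induction d with
  | zero =>
    refine ⟨SimpleGraph.Reachable.refl u, huv.reachable, ?_⟩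
    intro w hw
    obtain ⟨p⟩ := hw
    refine ⟨p, ?_⟩
    intro z hz
    rw [SimpleGraph.Walk.mem_support_iff_exists_append] at hz
    obtain ⟨q, r, rfl⟩ := hz
    exact ⟨q⟩
  | succ d ih =>
    obtain ⟨hu, hv, hub⟩ := ih
    have hne : (chain G u v d).Nonempty := ⟨u, hu⟩
    have hcT : ctr (chain G u v d) ∈ chain G u v d := ctr_mem hne
    have hRu : RIn G (chain G u v d) u (ctr (chain G u v d)) := hub _ hcT
    have hRc : ∀ w ∈ chain G u v d, RIn G (chain G u v d) (ctr (chain G u v d)) w := by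
      intro w hw
      exact hRu.symm.trans (hub w hw)
    have e1 : lv G (chain G u v d) v ≤ lv G (chain G u v d) u + 1 :=
      distIn_step (hRc u hu) huv hv
    have e2 : lv G (chain G u v d) u ≤ lv G (chain G u v d) v + 1 :=
      distIn_step (hRc v hv) huv.symm hu
    have hmin1 := min_le_left (lv G (chain G u v d) u) (lv G (chain G u v d) v)
    have hmin2 := min_le_right (lv G (chain G u v d) u) (lv G (chain G u v d) v)
    have hmin3 := min_choice (lv G (chain G u v d) u) (lv G (chain G u v d) v)
    have hbu : lv G (chain G u v d) u = lab G u v d ∨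
        lv G (chain G u v d) u = lab G u v d + 1 := by
      unfold lab; rcases hmin3 with h | h <;> omega
    have hbv : lv G (chain G u v d) v = lab G u v d ∨
        lv G (chain G u v d) v = lab G u v d + 1 := by
      unfold lab; rcases hmin3 with h | h <;> omega
    have humem : u ∈ chain G u v (d + 1) := by
      rw [mem_chain_succ]
      exact ⟨SimpleGraph.Walk.nil, by
        intro z hz; simp at hz; subst hz; exact ⟨hu, hbu⟩⟩
    have hvmem : v ∈ chain G u v (d + 1) := by
      rw [mem_chain_succ]
      refine ⟨huv.toWalk, ?_⟩
      intro z hz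
      simp [SimpleGraph.Adj.toWalk, SimpleGraph.Walk.support_cons] at hz
      rcases hz with rfl | rfl
      · exact ⟨hu, hbu⟩
      · exact ⟨hv, hbv⟩
    refine ⟨humem, hvmem, ?_⟩
    intro w hw
    rw [mem_chain_succ] at hw
    obtain ⟨p, hp⟩ := hw
    refine ⟨p, ?_⟩
    intro z hz
    rw [SimpleGraph.Walk.mem_support_iff_exists_append] at hz
    obtain ⟨q, r, rfl⟩ := hz
    rw [mem_chain_succ]
    refine ⟨q, ?_⟩
    intro z' hz'
    refine hp z' ?_
    rw [SimpleGraph.Walk.mem_support_append_iff]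
    exact Or.inl hz'

lemma chain_le (u v : V) : ∀ {d e : ℕ}, d ≤ e → chain G u v e ⊆ chain G u v d := by
  intro d e
  induction e with
  | zero => intro h; have : d = 0 := by omega
            subst this; exact fun _ h => h
  | succ n ih =>
    intro h
    rcases Nat.eq_or_lt_of_le h with rfl | hlt
    · exact fun _ h => h
    · exact fun w hw => ih (by omega) (chain_band hw).1

lemma chain_symm (huv : G.Adj u v) : ∀ d, chain G u v d = chain G v u d := by
  intro d
  induction d with
  | zero =>
    ext w
    constructor
    · intro h; exact (huv.symm.reachable).trans h
    · intro h; exact (huv.reachable).trans h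
  | succ d ih =>
    have hlab : lab G u v d = lab G v u d := by
      unfold lab; rw [ih]; exact min_comm _ _
    have hvband := chain_band ((chain_basic huv (d+1)).2.1)
    have huband := chain_band ((chain_basic huv (d+1)).1)
    ext w
    rw [mem_chain_succ, mem_chain_succ, ih, hlab]
    constructor
    · rintro ⟨p, hp⟩
      refine ⟨SimpleGraph.Walk.cons huv.symm p, ?_⟩
      intro z hz
      rw [SimpleGraph.Walk.support_cons] at hz
      rcases List.mem_cons.mp hz with rfl | hz
      · rw [← ih, ← hlab]
        exact hvband
      · exact hp z hz
    · rintro ⟨p, hp⟩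
      refine ⟨SimpleGraph.Walk.cons huv p, ?_⟩
      intro z hz
      rw [SimpleGraph.Walk.support_cons] at hz
      rcases List.mem_cons.mp hz with rfl | hz
      · rw [← ih, ← hlab]
        exact huband
      · exact hp z hz

lemma lab_symm (huv : G.Adj u v) (d : ℕ) : lab G u v d = lab G v u d := by
  unfold lab; rw [chain_symm huv d]; exact min_comm _ _

lemma glue (huv : G.Adj u v) (hvz : G.Adj v z) {σ : ℕ}
    (hl : ∀ d < σ, lab G u v d % 4 = lab G v z d % 4) :
    ∀ d ≤ σ, chain G u v d = chain G v z d := by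
  intro d
  induction d with
  | zero =>
    intro _
    ext w
    constructor
    · intro h; exact (huv.symm.reachable).trans h
    · intro h; exact (huv.reachable).trans h
  | succ d ih =>
    intro hd
    have hT := ih (by omega)
    have b1 := chain_band ((chain_basic huv (d+1)).2.1)
    have b2 := chain_band ((chain_basic hvz (d+1)).1)
    rw [hT] at b1
    have hlabeq : lab G u v d = lab G v z d := by
      have hmod := hl d (by omega)
      rcases b1.2 with h1 | h1 <;> rcases b2.2 with h2 | h2 <;> omega
    have huband := chain_band ((chain_basic huv (d+1)).1)
    ext w
    rw [mem_chain_succ, mem_chain_succ, hT, hlabeq]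
    rw [hlabeq] at b1
    constructor
    · rintro ⟨p, hp⟩
      refine ⟨SimpleGraph.Walk.cons huv.symm p, ?_⟩
      intro z' hz'
      rw [SimpleGraph.Walk.support_cons] at hz'
      rcases List.mem_cons.mp hz' with rfl | hz'
      · exact b1
      · exact hp z' hz'
    · rintro ⟨p, hp⟩
      refine ⟨SimpleGraph.Walk.cons huv p, ?_⟩
      intro z' hz'
      rw [SimpleGraph.Walk.support_cons] at hz'
      rcases List.mem_cons.mp hz' with rfl | hz'
      · rw [← hT, ← hlabeq]
        exact huband
      · exact hp z' hz'



-- REAL PART F START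
open Classical in
noncomputable def Fcol (G : SimpleGraph V) (σ : ℕ) (u v : V) : Fin (4 ^ σ) :=
  if _h : G.Adj u v then
    finFunctionFinEquiv (fun d : Fin σ => (⟨lab G u v d % 4, by omega⟩ : Fin 4))
  else finFunctionFinEquiv (fun _ => (0 : Fin 4))

lemma Fcol_symm (G : SimpleGraph V) (σ : ℕ) (u v : V) : Fcol G σ u v = Fcol G σ v u := by
  unfold Fcol
  by_cases h : G.Adj u v
  · rw [dif_pos h, dif_pos h.symm]
    congr 1
    funext d
    exact Fin.ext (by simp [lab_symm h d])
  · rw [dif_neg h, dif_neg (fun h' => h h'.symm)]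

lemma Fcol_lab_eq {G : SimpleGraph V} {σ : ℕ} {x1 y1 x2 y2 : V}
    (h1 : G.Adj x1 y1) (h2 : G.Adj x2 y2)
    (he : Fcol G σ x1 y1 = Fcol G σ x2 y2) :
    ∀ d < σ, lab G x1 y1 d % 4 = lab G x2 y2 d % 4 := by
  intro d hd
  unfold Fcol at he
  rw [dif_pos h1, dif_pos h2] at he
  have h3 := finFunctionFinEquiv.injective he
  have h4 := congrFun h3 ⟨d, hd⟩
  simpa using congrArg Fin.val h4

lemma chain_dist {σ : ℕ} (hσ : 1 ≤ σ)
    (hK : ¬ InducedMinor (completeBipartiteGraph (Fin σ) (Fin σ)) G)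
    {u v : V} (huv : G.Adj u v) {p q : V}
    (hp : p ∈ chain G u v σ) (hq : q ∈ chain G u v σ) :
    G.dist p q < 12 * σ := by
  have hRuc : ∀ i, ∀ w ∈ chain G u v i,
      RIn G (chain G u v i) (ctr (chain G u v i)) w := by
    intro i w hw
    have hub := (chain_basic huv i).2.2
    have h1 : RIn G (chain G u v i) u (ctr (chain G u v i)) :=
      hub _ (ctr_mem ⟨u, (chain_basic huv i).1⟩)
    exact h1.symm.trans (hub w hw)
  by_cases hall : ∀ d < σ, 2 ≤ lab G u v d
  · by_contra hcon
    push_neg at hcon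
    refine hK (extract hσ (fun d => chain G u v d) (fun d => ctr (chain G u v d))
      (fun d => lab G u v d) ?_ ?_ ?_ hall hp hq ?_)
    · intro i _
      exact ctr_mem ⟨u, (chain_basic huv i).1⟩
    · intro i _ w hw
      exact hRuc i w hw
    · intro d _ w hw
      exact chain_band hw
    · omega
  · push_neg at hall
    obtain ⟨d, hdσ, hlab⟩ := hall
    have hsubσ : chain G u v σ ⊆ chain G u v (d + 1) := chain_le u v (by omega)
    have hp' := chain_band (hsubσ hp)
    have hq' := chain_band (hsubσ hq)
    have hdp : G.dist (ctr (chain G u v d)) p ≤ 2 := by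
      have h5 := dist_le_distIn (hRuc d p hp'.1)
      rcases hp'.2 with h | h <;> (unfold lv at h; omega)
    have hdq : G.dist (ctr (chain G u v d)) q ≤ 2 := by
      have h5 := dist_le_distIn (hRuc d q hq'.1)
      rcases hq'.2 with h | h <;> (unfold lv at h; omega)
    have hrp : G.Reachable (ctr (chain G u v d)) p := (hRuc d p hp'.1).reachable
    have hrq : G.Reachable (ctr (chain G u v d)) q := (hRuc d q hq'.1).reachable
    have htr : G.dist p q ≤ G.dist p (ctr (chain G u v d)) + G.dist (ctr (chain G u v d)) q :=
      dist_tri hrp.symm hrq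
    have hcomm : G.dist p (ctr (chain G u v d)) = G.dist (ctr (chain G u v d)) p :=
      SimpleGraph.dist_comm
    omega

end S13

/-- For all `σ ∈ ℕ⁺` there is `c = c(σ) ∈ ℕ⁺` such that every graph with no
induced minor isomorphic to `K_{σ,σ}` admits a `c`-edge-coloring of `G`-diameter less
than `12σ`. -/
theorem statement13 (σ : ℕ) (hσ : 1 ≤ σ) :
    ∃ c : ℕ, 1 ≤ c ∧
      ∀ (V : Type) [Fintype V] (G : SimpleGraph V),
        ¬ InducedMinor (completeBipartiteGraph (Fin σ) (Fin σ)) G →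
        ∃ F : V → V → Fin c, (∀ u v : V, F u v = F v u) ∧
          ∀ (i : Fin c) (a b : V), (colorSub G F i).Reachable a b →
            G.dist a b < 12 * σ := by
  classical
  refine ⟨4 ^ σ, Nat.one_le_pow _ _ (by norm_num), ?_⟩
  intro V _ G hK
  rcases isEmpty_or_nonempty V with hV | hV
  · exact ⟨fun u _ => (hV.elim u), fun u _ => (hV.elim u), fun _ a _ _ => (hV.elim a)⟩
  haveI := hV
  refine ⟨S13.Fcol G σ, fun u v => S13.Fcol_symm G σ u v, ?_⟩
  intro i a b hre
  obtain ⟨W⟩ := hre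
  cases W with
  | nil =>
    have h0 : G.dist a a = 0 := SimpleGraph.dist_self
    omega
  | cons h q =>
    rename_i γ
    have hedge : G.Adj a γ := h.1
    have hwalkchain : ∀ {y1 b1 : V} (W' : (colorSub G (S13.Fcol G σ) i).Walk y1 b1)
        {x1 : V}, (colorSub G (S13.Fcol G σ) i).Adj x1 y1 →
        ∀ z ∈ W'.support, z ∈ S13.chain G x1 y1 σ := by
      intro y1 b1 W'
      induction W' with
      | nil =>
        intro x1 hadj z hz
        simp at hz; subst hz
        exact (S13.chain_basic hadj.1 σ).2.1
      | @cons u1 v1 w1 h2 q2 ih =>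
        intro x1 hadj z hz
        rw [SimpleGraph.Walk.support_cons] at hz
        rcases List.mem_cons.mp hz with rfl | hz
        · exact (S13.chain_basic hadj.1 σ).2.1
        · have hFeq : S13.Fcol G σ x1 u1 = S13.Fcol G σ u1 v1 := by
            rw [hadj.2.1, h2.2.1]
          have hch : S13.chain G x1 u1 σ = S13.chain G u1 v1 σ :=
            S13.glue hadj.1 h2.1 (S13.Fcol_lab_eq hadj.1 h2.1 hFeq) σ le_rfl
          rw [hch]
          exact ih h2 z hz
    have hb : b ∈ S13.chain G a γ σ :=
      hwalkchain q h b q.end_mem_support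
    have ha : a ∈ S13.chain G a γ σ := (S13.chain_basic hedge σ).1
    exact S13.chain_dist hσ hK hedge ha hb
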